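/- For 1 < p ≤ 2 let g_p(t) = (t^p − 1)/(t − 1) + (t^{1−p} − 1)/(t − 1) for t > 0, t ≠ 1, and g_p(1) = 1. Then g_p is operator monotone on (0,∞). -/

import Mathlib

open Matrix Kronecker ComplexOrder

/-- Functional calculus: apply `g : ℝ → ℝ` to a Hermitian matrix via its spectral
decomposition (junk value `0` on non-Hermitian matrices). -/
noncomputable def matFun {ι : Type} [Fintype ι] [DecidableEq ι] (g : ℝ → ℝ)
    (M : Matrix ι ι ℂ) : Matrix ι ι ℂ :=
  if hM : M.IsHermitian then
    ∑ i, (g (hM.eigenvalues i) : ℂ) •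
      Matrix.vecMulVec (⇑(hM.eigenvectorBasis i)) (star ⇑(hM.eigenvectorBasis i))
  else 0

/-- Operator monotonicity on `(0,∞)`: monotone w.r.t. the Loewner order on positive
definite complex Hermitian matrices of all sizes. -/
def OperatorMonotone (g : ℝ → ℝ) : Prop :=
  ∀ (k : ℕ) (A B : Matrix (Fin k) (Fin k) ℂ), A.PosDef → B.PosDef →
    (B - A).PosSemidef → (matFun g B - matFun g A).PosSemidef

/-- Operator convexity on `(0,∞)` for positive definite complex Hermitian matrices
of all sizes. -/
def OperatorConvex (g : ℝ → ℝ) : Prop :=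
  ∀ (k : ℕ) (A B : Matrix (Fin k) (Fin k) ℂ), A.PosDef → B.PosDef →
    ∀ t : ℝ, 0 ≤ t → t ≤ 1 →
      (t • matFun g A + (1 - t) • matFun g B - matFun g (t • A + (1 - t) • B)).PosSemidef

/-- The function `g_p(t) = (tᵖ − 1)/(t − 1) + (t^{1−p} − 1)/(t − 1)` for `t ≠ 1`,
and `g_p(1) = 1`. -/
noncomputable def gWYD (p : ℝ) (t : ℝ) : ℝ :=
  if t = 1 then 1 else (t ^ p - 1) / (t - 1) + (t ^ (1 - p) - 1) / (t - 1)


section Aux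
open MeasureTheory Real Set
open MeasureTheory Real Set


lemma meas_aux (a b : ℝ) : Measurable (fun u : ℝ => u ^ a / (b + u)) := by
  fun_prop

lemma integrable_aux {a b : ℝ} (ha0 : 0 < a) (ha1 : a < 1) (hb : 0 < b) :
    IntegrableOn (fun u : ℝ => u ^ (a - 1) / (b + u)) (Ioi 0) := by
  have hIoi : Ioc (0:ℝ) 1 ∪ Ioi 1 = Ioi 0 := Ioc_union_Ioi_eq_Ioi zero_le_one
  rw [← hIoi]
  apply IntegrableOn.union
  · -- on (0,1]
    have hmaj : IntegrableOn (fun u : ℝ => b⁻¹ * u ^ (a - 1)) (Ioc 0 1) := by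
      apply Integrable.const_mul
      exact (intervalIntegral.intervalIntegrable_rpow' (a := 0) (b := 1) (r := a - 1) (by linarith)).1
    refine hmaj.integrable.mono' ((meas_aux (a-1) b).aestronglyMeasurable) ?_
    filter_upwards [ae_restrict_mem measurableSet_Ioc] with u hu
    have hu0 : 0 < u := hu.1
    have h1 : 0 ≤ u ^ (a - 1) := rpow_nonneg hu0.le _
    rw [norm_div, norm_of_nonneg h1, norm_of_nonneg (by positivity)]
    rw [div_le_iff₀ (by positivity)]
    rw [inv_mul_eq_div, div_mul_eq_mul_div, le_div_iff₀ hb]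
    nlinarith [rpow_nonneg hu0.le (a-1)]
  · -- on (1,∞)
    have hmaj : IntegrableOn (fun u : ℝ => u ^ (a - 2)) (Ioi 1) :=
      integrableOn_Ioi_rpow_of_lt (by linarith) one_pos
    refine hmaj.integrable.mono' ((meas_aux (a-1) b).aestronglyMeasurable) ?_
    filter_upwards [ae_restrict_mem measurableSet_Ioi] with u hu
    have hu0 : (0:ℝ) < u := lt_trans one_pos hu
    have h1 : 0 ≤ u ^ (a - 1) := rpow_nonneg hu0.le _
    rw [norm_div, norm_of_nonneg h1, norm_of_nonneg (by positivity)]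
    rw [div_le_iff₀ (by positivity)]
    calc u ^ (a-1) = u ^ (a-2) * u := by
          rw [← rpow_add_one hu0.ne' (a-2)]; ring_nf
      _ ≤ u ^ (a-2) * (b + u) := by
          have : 0 ≤ u ^ (a-2) := rpow_nonneg hu0.le _
          nlinarith

noncomputable def wydK (a : ℝ) : ℝ := ∫ u in Ioi (0:ℝ), u ^ (a - 1) / (1 + u)


lemma wydK_pos {a : ℝ} (ha0 : 0 < a) (ha1 : a < 1) : 0 < wydK a := by
  rw [wydK, setIntegral_pos_iff_support_of_nonneg_ae]
  · rw [show Function.support (fun u : ℝ => u ^ (a - 1) / (1 + u)) ∩ Ioi 0 = Ioi 0 by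
      apply inter_eq_right.2
      intro u hu
      have hu0 : (0:ℝ) < u := hu
      simp only [Function.mem_support]
      positivity]
    simp
  · filter_upwards [ae_restrict_mem measurableSet_Ioi] with u hu
    have hu0 : (0:ℝ) < u := hu
    positivity
  · exact integrable_aux ha0 ha1 one_pos

lemma integral_scale {a t : ℝ} (ha0 : 0 < a) (ha1 : a < 1) (ht : 0 < t) :
    ∫ u in Ioi (0:ℝ), u ^ (a - 1) / (t + u) = t ^ (a - 1) * wydK a := by
  have h := MeasureTheory.integral_comp_mul_left_Ioi
    (fun u : ℝ => u ^ (a - 1) / (t + u)) 0 ht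
  rw [mul_zero] at h
  have h2 : ∀ x ∈ Ioi (0:ℝ), (fun u : ℝ => u ^ (a-1) / (t + u)) (t * x)
      = t ^ (a - 1) / t * (x ^ (a - 1) / (1 + x)) := by
    intro x hx
    have hx0 : (0:ℝ) < x := hx
    simp only
    have h1x : (1:ℝ) + x ≠ 0 := by positivity
    rw [mul_rpow ht.le hx0.le, show t + t * x = t * (1 + x) by ring]
    field_simp
  rw [setIntegral_congr_fun measurableSet_Ioi h2, integral_const_mul, smul_eq_mul] at h
  rw [← wydK] at h
  have ht' : t ≠ 0 := ht.ne'
  field_simp at h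
  linarith [h]

lemma inv_subst {c : ℝ} (g : ℝ → ℝ) :
    ∫ x in Ioi (0:ℝ), x ^ (-2 : ℝ) * g x⁻¹ = ∫ y in Ioi (0:ℝ), g y := by
  have h := MeasureTheory.integral_comp_rpow_Ioi g (p := -1) (by norm_num)
  rw [← h]
  apply setIntegral_congr_fun measurableSet_Ioi
  intro x hx
  have hx0 : (0:ℝ) < x := hx
  simp only [smul_eq_mul]
  rw [rpow_neg_one]
  norm_num

lemma wydK_symm {s : ℝ} (hs0 : 0 < s) (hs1 : s < 1) :
    ∫ u in Ioi (0:ℝ), u ^ (-s) / (1 + u) = wydK s := by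
  have h := inv_subst (c := 1) (fun y : ℝ => y ^ (-s) / (1 + y))
  rw [← h, wydK]
  apply setIntegral_congr_fun measurableSet_Ioi
  intro x hx
  have hx0 : (0:ℝ) < x := hx
  simp only
  have h1 : (x⁻¹) ^ (-s) = x ^ s := by
    rw [← rpow_neg_one x, ← rpow_mul hx0.le]; norm_num
  have h2 : x ^ (-2:ℝ) = (x * x)⁻¹ := by
    rw [show (-2:ℝ) = -((2:ℕ):ℝ) by norm_num, rpow_neg hx0.le, rpow_natCast, sq]
  have h3 : x ^ (s - 1) = x ^ s / x := by
    rw [rpow_sub hx0, rpow_one]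
  rw [h1, h2, h3]
  have h1x : (1:ℝ) + x ≠ 0 := by positivity
  have hxx : x ≠ 0 := hx0.ne'
  field_simp
  ring

lemma D_symm (s : ℝ) :
    ∫ u in Ioi (0:ℝ), u ^ s / ((1 + u) * (1 + u)) = ∫ u in Ioi (0:ℝ), u ^ (-s) / ((1 + u) * (1 + u)) := by
  have h := inv_subst (c := 1) (fun y : ℝ => y ^ (-s) / ((1 + y) * (1 + y)))
  rw [← h]
  apply setIntegral_congr_fun measurableSet_Ioi
  intro x hx
  have hx0 : (0:ℝ) < x := hx
  simp only
  have h1 : (x⁻¹) ^ (-s) = x ^ s := by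
    rw [← rpow_neg_one x, ← rpow_mul hx0.le]; norm_num
  have h2 : x ^ (-2:ℝ) = (x * x)⁻¹ := by
    rw [show (-2:ℝ) = -((2:ℕ):ℝ) by norm_num, rpow_neg hx0.le, rpow_natCast, sq]
  rw [h1, h2]
  have h1x : (1:ℝ) + x ≠ 0 := by positivity
  have hxx : x ≠ 0 := hx0.ne'
  field_simp
  ring

noncomputable def wydPhi (s t l : ℝ) : ℝ :=
  (t * (l ^ (s-1) / (t + l)) + l ^ s / ((1+l)*(t+l)) - l ^ (-s) / ((1+l)*(t+l))) / wydK s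

noncomputable def wydW (s l : ℝ) : ℝ := (l ^ (s+1) + l ^ (-s)) / ((1+l) * wydK s)

variable {s t : ℝ}

lemma int_piece1 (hs0 : 0 < s) (hs1 : s < 1) (ht : 0 < t) :
    IntegrableOn (fun l : ℝ => t * (l ^ (s-1) / (t + l))) (Ioi 0) :=
  (integrable_aux hs0 hs1 ht).const_mul t

lemma meas_q (a : ℝ) : Measurable (fun l : ℝ => l ^ a / ((1+l)*(t+l))) := by fun_prop

lemma int_q2 (hs0 : 0 < s) (hs1 : s < 1) (ht : 0 < t) :
    IntegrableOn (fun l : ℝ => l ^ s / ((1+l)*(t+l))) (Ioi 0) := by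
  refine ((integrable_aux hs0 hs1 one_pos).integrable).mono'
    ((meas_q s).aestronglyMeasurable) ?_
  filter_upwards [ae_restrict_mem measurableSet_Ioi] with l hl
  have hl0 : (0:ℝ) < l := hl
  have e : l ^ s = l ^ (s-1) * l := by
    rw [← rpow_add_one hl0.ne' (s-1), sub_add_cancel]
  rw [norm_of_nonneg (by positivity)]
  rw [div_le_div_iff₀ (by positivity) (by positivity)]
  nlinarith [rpow_nonneg hl0.le (s-1), rpow_nonneg hl0.le s]

lemma int_q3 (hs0 : 0 < s) (hs1 : s < 1) (ht : 0 < t) :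
    IntegrableOn (fun l : ℝ => l ^ (-s) / ((1+l)*(t+l))) (Ioi 0) := by
  have h1s0 : 0 < 1 - s := by linarith
  refine (((integrable_aux h1s0 (by linarith) one_pos).const_mul t⁻¹)).mono'
    ((meas_q (-s)).aestronglyMeasurable) ?_
  filter_upwards [ae_restrict_mem measurableSet_Ioi] with l hl
  have hl0 : (0:ℝ) < l := hl
  have e : l ^ ((1-s)-1) = l ^ (-s) := by norm_num
  rw [e, norm_of_nonneg (by positivity), inv_mul_eq_div, div_div]
  rw [div_le_div_iff₀ (by positivity) (by positivity)]
  have h1 : 0 ≤ l ^ (-s) := rpow_nonneg hl0.le _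
  nlinarith [mul_le_mul_of_nonneg_left (show t ≤ t + l by linarith)
    (mul_nonneg h1 (by positivity : (0:ℝ) ≤ 1 + l))]

lemma val_q2 (hs0 : 0 < s) (hs1 : s < 1) (ht : 0 < t) (ht1 : t ≠ 1) :
    ∫ l in Ioi (0:ℝ), l ^ s / ((1+l)*(t+l)) = wydK s * ((t ^ s - 1)/(t-1)) := by
  have key : ∀ l ∈ Ioi (0:ℝ), l ^ s / ((1+l)*(t+l)) * (t-1)
      = t * (l ^ (s-1) / (t + l)) - l ^ (s-1) / (1 + l) := by
    intro l hl
    have hl0 : (0:ℝ) < l := hl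
    have e : l ^ s = l ^ (s-1) * l := by
      rw [← rpow_add_one hl0.ne' (s-1), sub_add_cancel]
    have h1 : (1:ℝ) + l ≠ 0 := by positivity
    have h2 : t + l ≠ 0 := by positivity
    rw [e]
    field_simp
    ring
  have h2 := integral_mul_const (μ := volume.restrict (Ioi 0)) (t-1)
    (fun l : ℝ => l ^ s / ((1+l)*(t+l)))
  rw [setIntegral_congr_fun measurableSet_Ioi key] at h2
  rw [integral_sub (int_piece1 hs0 hs1 ht) (integrable_aux hs0 hs1 one_pos),
    integral_const_mul, integral_scale hs0 hs1 ht, ← wydK] at h2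
  have e2 : t ^ s = t ^ (s-1) * t := by
    rw [← rpow_add_one ht.ne' (s-1), sub_add_cancel]
  have ht1' : t - 1 ≠ 0 := sub_ne_zero.mpr ht1
  have key2 : (∫ l in Ioi (0:ℝ), l ^ s / ((1+l)*(t+l))) * (t-1) = (t ^ s - 1) * wydK s := by
    rw [← h2, e2]; ring
  field_simp
  linear_combination key2

lemma val_q3 (hs0 : 0 < s) (hs1 : s < 1) (ht : 0 < t) (ht1 : t ≠ 1) :
    ∫ l in Ioi (0:ℝ), l ^ (-s) / ((1+l)*(t+l)) = wydK s * ((1 - t ^ (-s))/(t-1)) := by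
  have h1s0 : 0 < 1 - s := by linarith
  have h1s1 : 1 - s < 1 := by linarith
  have key : ∀ l ∈ Ioi (0:ℝ), l ^ (-s) / ((1+l)*(t+l)) * (t-1)
      = l ^ (-s) / (1 + l) - l ^ ((1-s)-1) / (t + l) := by
    intro l hl
    have hl0 : (0:ℝ) < l := hl
    have e : l ^ ((1-s)-1) = l ^ (-s) := by norm_num
    have h1 : (1:ℝ) + l ≠ 0 := by positivity
    have h2 : t + l ≠ 0 := by positivity
    rw [e]
    field_simp
    ring
  have h2 := integral_mul_const (μ := volume.restrict (Ioi 0)) (t-1)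
    (fun l : ℝ => l ^ (-s) / ((1+l)*(t+l)))
  rw [setIntegral_congr_fun measurableSet_Ioi key] at h2
  have int1 : IntegrableOn (fun l : ℝ => l ^ (-s) / (1 + l)) (Ioi 0) := by
    have := integrable_aux h1s0 h1s1 one_pos
    simpa [show (1:ℝ) - s - 1 = -s by ring] using this
  rw [integral_sub int1 (integrable_aux h1s0 h1s1 ht), integral_scale h1s0 h1s1 ht] at h2
  have e3 : ∫ l in Ioi (0:ℝ), l ^ (-s) / (1 + l) = wydK s := by
    rw [← wydK_symm hs0 hs1]
  have e4 : wydK (1 - s) = wydK s := by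
    rw [← wydK_symm hs0 hs1, wydK]
    apply setIntegral_congr_fun measurableSet_Ioi
    intro x hx
    norm_num
  rw [e3, e4, show (1:ℝ) - s - 1 = -s by ring] at h2
  have ht1' : t - 1 ≠ 0 := sub_ne_zero.mpr ht1
  field_simp
  linear_combination -h2

lemma wydW_nonneg (hs0 : 0 < s) (hs1 : s < 1) {l : ℝ} (hl : 0 < l) : 0 ≤ wydW s l := by
  have hK := wydK_pos hs0 hs1
  have h1 : 0 ≤ l ^ (s+1) := rpow_nonneg hl.le _
  have h2 : 0 ≤ l ^ (-s) := rpow_nonneg hl.le _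
  have : (0:ℝ) < (1+l) * wydK s := by positivity
  exact div_nonneg (by linarith) this.le

lemma wydPhi_decomp (hs0 : 0 < s) (hs1 : s < 1) (ht : 0 < t) {l : ℝ} (hl : 0 < l) :
    wydPhi s t l = l ^ (s-1) / wydK s - wydW s l / (t + l) := by
  have hK := (wydK_pos hs0 hs1).ne'
  have e1 : l ^ s = l ^ (s-1) * l := by
    rw [← rpow_add_one hl.ne' (s-1), sub_add_cancel]
  have e2 : l ^ (s+1) = l ^ s * l := by
    rw [← rpow_add_one hl.ne' s]
  have h1 : (1:ℝ) + l ≠ 0 := by positivity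
  have h2 : t + l ≠ 0 := by positivity
  have e2' : l ^ (s+1) = l ^ (s-1) * (l * l) := by
    rw [e2, e1]; ring
  rw [wydPhi, wydW, e1, e2']
  have hKK : wydK s ≠ 0 := hK
  have hl' : l ≠ 0 := hl.ne'
  generalize l ^ (s-1) = a
  generalize l ^ (-s) = b
  field_simp
  ring

lemma wydPhi_integrableOn (hs0 : 0 < s) (hs1 : s < 1) (ht : 0 < t) :
    IntegrableOn (fun l => wydPhi s t l) (Ioi 0) := by
  simp only [wydPhi]
  exact (((int_piece1 hs0 hs1 ht).add (int_q2 hs0 hs1 ht)).sub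
    (int_q3 hs0 hs1 ht)).div_const _

lemma wydPhi_integral (hs0 : 0 < s) (hs1 : s < 1) (ht : 0 < t) :
    ∫ l in Ioi (0:ℝ), wydPhi s t l = gWYD (1+s) t := by
  have hK := wydK_pos hs0 hs1
  simp only [wydPhi]
  have i1 : IntegrableOn
      (fun l : ℝ => t * (l ^ (s-1) / (t + l)) + l ^ s / ((1+l)*(t+l))) (Ioi 0) := by
    exact (int_piece1 hs0 hs1 ht).add (int_q2 hs0 hs1 ht)
  rw [integral_div,
    integral_sub i1 (int_q3 hs0 hs1 ht),
    integral_add (int_piece1 hs0 hs1 ht) (int_q2 hs0 hs1 ht),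
    integral_const_mul, integral_scale hs0 hs1 ht]
  by_cases ht1 : t = 1
  · subst ht1
    rw [D_symm s, gWYD, if_pos rfl, one_rpow]
    field_simp
    ring
  · rw [val_q2 hs0 hs1 ht ht1, val_q3 hs0 hs1 ht ht1, gWYD, if_neg ht1]
    have e1 : t ^ ((1:ℝ)+s) = t * t ^ s := by
      rw [rpow_add ht, rpow_one]
    have e2 : t ^ s = t ^ (s-1) * t := by
      rw [← rpow_add_one ht.ne' (s-1), sub_add_cancel]
    have e3 : t ^ (1-((1:ℝ)+s)) = t ^ (-s) := by norm_num
    rw [e1, e3]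
    have ht1' : t - 1 ≠ 0 := sub_ne_zero.mpr ht1
    field_simp
    linear_combination (1 - t) * e2
end Aux

section MatAux
open Matrix ComplexOrder
namespace WYD
variable {n : Type} [Fintype n] [DecidableEq n] {A B M : Matrix n n ℂ}

lemma vecMulVec_mulVec (u w x : n → ℂ) : vecMulVec u w *ᵥ x = (w ⬝ᵥ x) • u := by
  ext i
  simp only [vecMulVec_apply, mulVec, dotProduct, Pi.smul_apply, smul_eq_mul, Finset.sum_mul,
    Finset.mul_sum]
  apply Finset.sum_congr rfl
  intro j _
  ring

lemma mul_vecMulVec (M : Matrix n n ℂ) (u w : n → ℂ) :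
    M * vecMulVec u w = vecMulVec (M *ᵥ u) w := by
  ext i j
  simp only [vecMulVec_apply, mul_apply, mulVec, dotProduct, Finset.sum_mul]
  apply Finset.sum_congr rfl
  intro l _
  ring

lemma conjTranspose_vecMulVec (u w : n → ℂ) :
    (vecMulVec u w)ᴴ = vecMulVec (star w) (star u) := by
  ext i j
  simp only [vecMulVec_apply, conjTranspose_apply, Pi.star_apply, star_mul']
  exact mul_comm _ _

lemma smul_vecMulVec (c : ℂ) (u w : n → ℂ) :
    vecMulVec (c • u) w = c • vecMulVec u w := by
  ext i j
  simp only [vecMulVec_apply, Pi.smul_apply, smul_eq_mul, Matrix.smul_apply]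
  ring

lemma sum_proj (hA : A.IsHermitian) :
    ∑ i, vecMulVec ⇑(hA.eigenvectorBasis i) (star ⇑(hA.eigenvectorBasis i)) = 1 := by
  have h := (Matrix.mem_unitaryGroup_iff).mp hA.eigenvectorUnitary.2
  calc ∑ i, vecMulVec ⇑(hA.eigenvectorBasis i) (star ⇑(hA.eigenvectorBasis i))
      = (hA.eigenvectorUnitary : Matrix n n ℂ) * star (hA.eigenvectorUnitary : Matrix n n ℂ) := by
        ext a b
        simp only [Matrix.sum_apply, vecMulVec_apply, Pi.star_apply, mul_apply,
          star_eq_conjTranspose, conjTranspose_apply, Matrix.IsHermitian.eigenvectorUnitary_apply]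
    _ = 1 := h

lemma matFun_eq (g : ℝ → ℝ) (hA : A.IsHermitian) :
    matFun g A = ∑ i, (g (hA.eigenvalues i) : ℂ) •
      vecMulVec (⇑(hA.eigenvectorBasis i)) (star ⇑(hA.eigenvectorBasis i)) := dif_pos hA

lemma matFun_isHermitian (g : ℝ → ℝ) (M : Matrix n n ℂ) : (matFun g M).IsHermitian := by
  unfold matFun
  split
  · next hM =>
    unfold Matrix.IsHermitian
    rw [conjTranspose_sum]
    apply Finset.sum_congr rfl
    intro i _
    rw [conjTranspose_smul, conjTranspose_vecMulVec, star_star]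
    congr 1
    simp [Complex.ext_iff]
  · exact isHermitian_zero

lemma mul_proj (hA : A.IsHermitian) (i : n) :
    A * vecMulVec (⇑(hA.eigenvectorBasis i)) (star ⇑(hA.eigenvectorBasis i))
      = ((hA.eigenvalues i : ℝ) : ℂ) •
        vecMulVec (⇑(hA.eigenvectorBasis i)) (star ⇑(hA.eigenvectorBasis i)) := by
  have h := hA.mulVec_eigenvectorBasis i
  rw [RCLike.real_smul_eq_coe_smul (K := ℂ)] at h
  rw [mul_vecMulVec, h, smul_vecMulVec]
  rfl

lemma spectral_sum (hA : A.IsHermitian) :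
    A = ∑ i, ((hA.eigenvalues i : ℝ) : ℂ) •
      vecMulVec (⇑(hA.eigenvectorBasis i)) (star ⇑(hA.eigenvectorBasis i)) := by
  calc A = A * 1 := (mul_one A).symm
    _ = A * ∑ i, vecMulVec (⇑(hA.eigenvectorBasis i)) (star ⇑(hA.eigenvectorBasis i)) := by
        rw [sum_proj hA]
    _ = ∑ i, ((hA.eigenvalues i : ℝ) : ℂ) •
        vecMulVec (⇑(hA.eigenvectorBasis i)) (star ⇑(hA.eigenvectorBasis i)) := by
        rw [Finset.mul_sum]
        exact Finset.sum_congr rfl fun i _ => mul_proj hA i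

lemma posDef_add_smul (hA : A.PosDef) {μ : ℝ} (hμ : 0 ≤ μ) :
    (A + (μ:ℂ) • (1 : Matrix n n ℂ)).PosDef := by
  apply hA.add_posSemidef
  rw [Matrix.smul_one_eq_diagonal]
  exact Matrix.PosSemidef.diagonal fun i => by
    simpa using Complex.zero_le_real.2 hμ

lemma inv_add_smul_eq_sum (hA : A.PosDef) {μ : ℝ} (hμ : 0 ≤ μ) :
    (A + (μ:ℂ) • (1 : Matrix n n ℂ))⁻¹
      = ∑ i, (((hA.1.eigenvalues i + μ)⁻¹ : ℝ) : ℂ) •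
          vecMulVec (⇑(hA.1.eigenvectorBasis i)) (star ⇑(hA.1.eigenvectorBasis i)) := by
  apply inv_eq_right_inv
  rw [Finset.mul_sum]
  have key : ∀ i : n, (A + (μ:ℂ) • (1 : Matrix n n ℂ)) *
      ((((hA.1.eigenvalues i + μ)⁻¹ : ℝ) : ℂ) •
        vecMulVec (⇑(hA.1.eigenvectorBasis i)) (star ⇑(hA.1.eigenvectorBasis i)))
      = vecMulVec (⇑(hA.1.eigenvectorBasis i)) (star ⇑(hA.1.eigenvectorBasis i)) := by
    intro i
    have hev : 0 < hA.1.eigenvalues i + μ := by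
      have := hA.eigenvalues_pos i
      linarith
    rw [Matrix.mul_smul, add_mul, mul_proj hA.1, Matrix.smul_mul, one_mul, ← add_smul,
      smul_smul]
    rw [show ((hA.1.eigenvalues i : ℝ) : ℂ) + (μ:ℂ) = (((hA.1.eigenvalues i + μ : ℝ)) : ℂ) by
      push_cast; ring]
    rw [← Complex.ofReal_mul, inv_mul_cancel₀ hev.ne', Complex.ofReal_one, one_smul]
  rw [Finset.sum_congr rfl fun i _ => key i]
  exact sum_proj hA.1

lemma herm_shift (hM : (M : Matrix n n ℂ).IsHermitian) (v w : n → ℂ) :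
    star (M *ᵥ v) ⬝ᵥ w = star v ⬝ᵥ (M *ᵥ w) := by
  rw [star_mulVec, hM, dotProduct_mulVec]

theorem inv_sub_inv_posSemidef (hA : A.PosDef) (hB : B.PosDef)
    (hAB : (B - A).PosSemidef) : (A⁻¹ - B⁻¹).PosSemidef := by
  have hAu := hA.isUnit
  have hBu := hB.isUnit
  have hAinv : A * A⁻¹ = 1 := mul_nonsing_inv A (isUnit_iff_isUnit_det A |>.1 hAu)
  have hBinv : B * B⁻¹ = 1 := mul_nonsing_inv B (isUnit_iff_isUnit_det B |>.1 hBu)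
  refine Matrix.PosSemidef.of_dotProduct_mulVec_nonneg ?_ ?_
  · exact hA.1.inv.sub hB.1.inv
  · intro x
    have eA : A *ᵥ (A⁻¹ *ᵥ x) = x := by
      rw [Matrix.mulVec_mulVec, hAinv, Matrix.one_mulVec]
    have eB : B *ᵥ (B⁻¹ *ᵥ x) = x := by
      rw [Matrix.mulVec_mulVec, hBinv, Matrix.one_mulVec]
    have qA : 0 ≤ star (B⁻¹ *ᵥ x - A⁻¹ *ᵥ x) ⬝ᵥ A *ᵥ (B⁻¹ *ᵥ x - A⁻¹ *ᵥ x) :=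
      hA.posSemidef.dotProduct_mulVec_nonneg _
    have qB : 0 ≤ star (B⁻¹ *ᵥ x) ⬝ᵥ (B - A) *ᵥ (B⁻¹ *ᵥ x) := hAB.dotProduct_mulVec_nonneg _
    have h1 : star (B⁻¹ *ᵥ x) ⬝ᵥ x = star x ⬝ᵥ B⁻¹ *ᵥ x := herm_shift hB.1.inv x x
    have h2 : star (A⁻¹ *ᵥ x) ⬝ᵥ x = star x ⬝ᵥ A⁻¹ *ᵥ x := herm_shift hA.1.inv x x
    have h3 : star (A⁻¹ *ᵥ x) ⬝ᵥ (A *ᵥ (B⁻¹ *ᵥ x)) = star x ⬝ᵥ B⁻¹ *ᵥ x := by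
      rw [← herm_shift hA.1, eA]
    have key : star x ⬝ᵥ (A⁻¹ - B⁻¹) *ᵥ x
        = star (B⁻¹ *ᵥ x - A⁻¹ *ᵥ x) ⬝ᵥ A *ᵥ (B⁻¹ *ᵥ x - A⁻¹ *ᵥ x)
          + star (B⁻¹ *ᵥ x) ⬝ᵥ (B - A) *ᵥ (B⁻¹ *ᵥ x) := by
      simp only [Matrix.sub_mulVec, Matrix.mulVec_sub, star_sub, sub_dotProduct,
        dotProduct_sub, eA, eB]
      rw [h1, h2, h3]
      ring
    rw [key]
    exact add_nonneg qA qB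

variable {ι : Type} [Fintype ι]

lemma sum_mulVec (f : ι → Matrix n n ℂ) (x : n → ℂ) :
    (∑ i, f i) *ᵥ x = ∑ i, f i *ᵥ x := by
  ext j
  simp only [mulVec, dotProduct, Matrix.sum_apply, Finset.sum_apply, Finset.sum_mul]
  exact Finset.sum_comm

lemma dot_sum_mulVec (f : ι → Matrix n n ℂ) (x : n → ℂ) :
    star x ⬝ᵥ (∑ i, f i) *ᵥ x = ∑ i, star x ⬝ᵥ (f i) *ᵥ x := by
  rw [sum_mulVec]
  simp only [dotProduct, Finset.sum_apply, Finset.mul_sum]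
  exact Finset.sum_comm

lemma dot_smul_mulVec (c : ℂ) (M : Matrix n n ℂ) (x : n → ℂ) :
    star x ⬝ᵥ (c • M) *ᵥ x = c * (star x ⬝ᵥ M *ᵥ x) := by
  rw [smul_mulVec, dotProduct_smul, smul_eq_mul]

end WYD

end MatAux

section Main
open Matrix ComplexOrder MeasureTheory Real Set WYD

lemma integral_nonneg_cx {μ : Measure ℝ} {f : ℝ → ℂ} (hf : Integrable f μ)
    (h : ∀ᵐ l ∂μ, 0 ≤ f l) : 0 ≤ ∫ l, f l ∂μ := by
  have hre := integral_re (𝕜 := ℂ) hf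
  have him := integral_im (𝕜 := ℂ) hf
  simp only [RCLike.re_to_complex, RCLike.im_to_complex] at hre him
  rw [Complex.le_def]
  constructor
  · rw [Complex.zero_re, ← hre]
    apply integral_nonneg_of_ae
    filter_upwards [h] with l hl
    have := (Complex.le_def.1 hl).1
    simpa using this
  · rw [Complex.zero_im, ← him, eq_comm]
    apply integral_eq_zero_of_ae
    filter_upwards [h] with l hl
    have := (Complex.le_def.1 hl).2
    simpa using this.symm

variable {n : Type} [Fintype n] [DecidableEq n]

lemma qform_matFun {s : ℝ} (hs0 : 0 < s) (hs1 : s < 1) {A : Matrix n n ℂ} (hA : A.PosDef)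
    (x : n → ℂ) :
    IntegrableOn (fun l => ∑ i, ((wydPhi s (hA.1.eigenvalues i) l : ℝ) : ℂ) *
        (star x ⬝ᵥ (vecMulVec (⇑(hA.1.eigenvectorBasis i)) (star ⇑(hA.1.eigenvectorBasis i))) *ᵥ x))
      (Ioi 0) ∧
    star x ⬝ᵥ (matFun (gWYD (1+s)) A) *ᵥ x
      = ∫ l in Ioi (0:ℝ), ∑ i, ((wydPhi s (hA.1.eigenvalues i) l : ℝ) : ℂ) *
          (star x ⬝ᵥ (vecMulVec (⇑(hA.1.eigenvectorBasis i)) (star ⇑(hA.1.eigenvectorBasis i))) *ᵥ x) := by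
  set c : n → ℂ := fun i =>
    star x ⬝ᵥ (vecMulVec (⇑(hA.1.eigenvectorBasis i)) (star ⇑(hA.1.eigenvectorBasis i))) *ᵥ x with hc
  have hint : ∀ i : n, IntegrableOn
      (fun l => ((wydPhi s (hA.1.eigenvalues i) l : ℝ) : ℂ) * c i) (Ioi 0) := by
    intro i
    exact ((wydPhi_integrableOn hs0 hs1 (hA.eigenvalues_pos i)).ofReal).mul_const (c i)
  constructor
  · exact integrable_finset_sum _ fun i _ => hint i
  · rw [matFun_eq _ hA.1, dot_sum_mulVec]
    rw [integral_finset_sum _ fun i _ => hint i]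
    apply Finset.sum_congr rfl
    intro i _
    have hofs : ∫ l in Ioi (0:ℝ), ((wydPhi s (hA.1.eigenvalues i) l : ℝ) : ℂ)
        = ((∫ l in Ioi (0:ℝ), wydPhi s (hA.1.eigenvalues i) l : ℝ) : ℂ) := integral_ofReal
    rw [dot_smul_mulVec, integral_mul_const, hofs,
      wydPhi_integral hs0 hs1 (hA.eigenvalues_pos i)]

lemma qform_decomp {s : ℝ} (hs0 : 0 < s) (hs1 : s < 1) {A : Matrix n n ℂ} (hA : A.PosDef)
    (x : n → ℂ) {l : ℝ} (hl : 0 < l) :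
    ∑ i, ((wydPhi s (hA.1.eigenvalues i) l : ℝ) : ℂ) *
        (star x ⬝ᵥ (vecMulVec (⇑(hA.1.eigenvectorBasis i)) (star ⇑(hA.1.eigenvectorBasis i))) *ᵥ x)
      = ((l ^ (s-1) / wydK s : ℝ) : ℂ) * (star x ⬝ᵥ (1 : Matrix n n ℂ) *ᵥ x)
        - ((wydW s l : ℝ) : ℂ) * (star x ⬝ᵥ (A + (l : ℂ) • 1)⁻¹ *ᵥ x) := by
  have e1 : star x ⬝ᵥ (1 : Matrix n n ℂ) *ᵥ x
      = ∑ i, star x ⬝ᵥ (vecMulVec (⇑(hA.1.eigenvectorBasis i)) (star ⇑(hA.1.eigenvectorBasis i))) *ᵥ x := by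
    rw [← sum_proj hA.1, dot_sum_mulVec]
  have e2 : star x ⬝ᵥ (A + (l : ℂ) • 1)⁻¹ *ᵥ x
      = ∑ i, (((hA.1.eigenvalues i + l)⁻¹ : ℝ) : ℂ) *
          (star x ⬝ᵥ (vecMulVec (⇑(hA.1.eigenvectorBasis i)) (star ⇑(hA.1.eigenvectorBasis i))) *ᵥ x) := by
    rw [inv_add_smul_eq_sum hA hl.le, dot_sum_mulVec]
    exact Finset.sum_congr rfl fun i _ => dot_smul_mulVec _ _ _
  rw [e1, e2, Finset.mul_sum, Finset.mul_sum, ← Finset.sum_sub_distrib]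
  apply Finset.sum_congr rfl
  intro i _
  rw [wydPhi_decomp hs0 hs1 (hA.eigenvalues_pos i) hl]
  push_cast
  ring

theorem gWYD_operatorMonotone' (p : ℝ) (hp1 : 1 < p) (hp2 : p ≤ 2) :
    OperatorMonotone (gWYD p) := by
  intro k A B hA hB hAB
  refine Matrix.PosSemidef.of_dotProduct_mulVec_nonneg ((matFun_isHermitian _ _).sub (matFun_isHermitian _ _)) ?_
  intro x
  rcases eq_or_lt_of_le hp2 with hp2' | hp2'
  · -- p = 2
    subst hp2'
    have hg2 : ∀ t : ℝ, 0 < t → gWYD 2 t = t + 1 - t⁻¹ := by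
      intro t ht
      rw [gWYD]
      split
      · next h => rw [h]; norm_num
      · next h =>
        have ht1 : t - 1 ≠ 0 := sub_ne_zero.mpr h
        have e1 : t ^ (2:ℝ) = t * t := by
          rw [show (2:ℝ) = ((2:ℕ):ℝ) by norm_num, rpow_natCast, sq]
        have e2 : t ^ ((1:ℝ)-2) = t⁻¹ := by
          norm_num
          exact rpow_neg_one t
        rw [e1, e2]
        field_simp
        ring
    have rep : ∀ (M : Matrix (Fin k) (Fin k) ℂ), M.PosDef →
        matFun (gWYD 2) M = M + 1 - M⁻¹ := by
      intro M hM
      have hinv := inv_add_smul_eq_sum hM (le_refl (0:ℝ))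
      simp only [Complex.ofReal_zero, zero_smul, add_zero] at hinv
      calc matFun (gWYD 2) M
          = ∑ i, (gWYD 2 (hM.1.eigenvalues i) : ℂ) •
              vecMulVec (⇑(hM.1.eigenvectorBasis i)) (star ⇑(hM.1.eigenvectorBasis i)) :=
            matFun_eq _ hM.1
        _ = ∑ i, (((hM.1.eigenvalues i : ℝ) : ℂ) •
              vecMulVec (⇑(hM.1.eigenvectorBasis i)) (star ⇑(hM.1.eigenvectorBasis i))
            + vecMulVec (⇑(hM.1.eigenvectorBasis i)) (star ⇑(hM.1.eigenvectorBasis i))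
            - (((hM.1.eigenvalues i)⁻¹ : ℝ) : ℂ) •
              vecMulVec (⇑(hM.1.eigenvectorBasis i)) (star ⇑(hM.1.eigenvectorBasis i))) := by
            apply Finset.sum_congr rfl
            intro i _
            rw [hg2 _ (hM.eigenvalues_pos i)]
            push_cast
            rw [sub_smul, add_smul, one_smul]
        _ = (∑ i, ((hM.1.eigenvalues i : ℝ) : ℂ) •
              vecMulVec (⇑(hM.1.eigenvectorBasis i)) (star ⇑(hM.1.eigenvectorBasis i)))
            + (∑ i, vecMulVec (⇑(hM.1.eigenvectorBasis i)) (star ⇑(hM.1.eigenvectorBasis i)))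
            - (∑ i, (((hM.1.eigenvalues i)⁻¹ : ℝ) : ℂ) •
              vecMulVec (⇑(hM.1.eigenvectorBasis i)) (star ⇑(hM.1.eigenvectorBasis i))) := by
            rw [Finset.sum_sub_distrib, Finset.sum_add_distrib]
        _ = M + 1 - M⁻¹ := by
            rw [← spectral_sum hM.1, ← sum_proj hM.1]
            congr 1
            rw [hinv]
    rw [rep A hA, rep B hB,
      show (B + 1 - B⁻¹) - (A + 1 - A⁻¹) = (B - A) + (A⁻¹ - B⁻¹) by abel,
      Matrix.add_mulVec, dotProduct_add]
    exact add_nonneg (hAB.dotProduct_mulVec_nonneg x) ((inv_sub_inv_posSemidef hA hB hAB).dotProduct_mulVec_nonneg x)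
  · -- 1 < p < 2
    set s : ℝ := p - 1 with hs
    have hs0 : 0 < s := by rw [hs]; linarith
    have hs1 : s < 1 := by rw [hs]; linarith
    have hp' : 1 + s = p := by rw [hs]; ring
    rw [← hp']
    obtain ⟨intA, eqA⟩ := qform_matFun hs0 hs1 hA x
    obtain ⟨intB, eqB⟩ := qform_matFun hs0 hs1 hB x
    rw [Matrix.sub_mulVec, dotProduct_sub, eqA, eqB, ← integral_sub intB intA]
    apply integral_nonneg_cx (intB.sub intA)
    filter_upwards [ae_restrict_mem measurableSet_Ioi] with l hl
    have hl0 : (0:ℝ) < l := hl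
    simp only [Pi.sub_apply]
    rw [qform_decomp hs0 hs1 hA x hl0, qform_decomp hs0 hs1 hB x hl0]
    have key : ((l ^ (s-1) / wydK s : ℝ) : ℂ) * (star x ⬝ᵥ (1 : Matrix (Fin k) (Fin k) ℂ) *ᵥ x)
          - ((wydW s l : ℝ) : ℂ) * (star x ⬝ᵥ (B + (l : ℂ) • 1)⁻¹ *ᵥ x)
        - (((l ^ (s-1) / wydK s : ℝ) : ℂ) * (star x ⬝ᵥ (1 : Matrix (Fin k) (Fin k) ℂ) *ᵥ x)
          - ((wydW s l : ℝ) : ℂ) * (star x ⬝ᵥ (A + (l : ℂ) • 1)⁻¹ *ᵥ x))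
        = ((wydW s l : ℝ) : ℂ) *
            (star x ⬝ᵥ ((A + (l : ℂ) • 1)⁻¹ - (B + (l : ℂ) • 1)⁻¹) *ᵥ x) := by
      rw [Matrix.sub_mulVec, dotProduct_sub]
      ring
    rw [key]
    apply mul_nonneg
    · exact Complex.zero_le_real.2 (wydW_nonneg hs0 hs1 hl0)
    · refine (inv_sub_inv_posSemidef (posDef_add_smul hA hl0.le)
        (posDef_add_smul hB hl0.le) ?_).dotProduct_mulVec_nonneg x
      rw [add_sub_add_right_eq_sub]
      exact hAB

end Main

/-- For `1 < p ≤ 2` the function `g_p` is operator monotone on `(0,∞)`. -/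
theorem gWYD_operatorMonotone (p : ℝ) (hp1 : 1 < p) (hp2 : p ≤ 2) :
    OperatorMonotone (gWYD p) :=
  gWYD_operatorMonotone' p hp1 hp2
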